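/- Gibbs' inequality for an evolved Boltzmann state: Let 𝒫 be a Boltzmann partition of Ω, U a measure-preserving bijection, and A ∈ 𝒫. Assume the series Σ_{B∈𝒫} |Pr(B|A) log(Pr(B|A)/μ(B))| converges, where Pr(B|A) = μ(U(A) ∩ B)/μ(A). Then the coarse-grained Gibbs entropy of the evolved Boltzmann state satisfies S_G[C(ρ_A ∘ U⁻¹)] ≥ log μ(A) = S_G[ρ_A]. -/

import Mathlib

open MeasureTheory Set

/-- The coarse-graining of a function `f` with respect to the partition `P`:
`(Cf)(x) = Σ_{B∈𝒫} (∫_B f dμ / μ(B)) χ_B(x)`. -/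
noncomputable def coarseGrain {Ω : Type*} [MeasurableSpace Ω]
    (μ : Measure Ω) (P : ℕ → Set Ω) (f : Ω → ℝ) : Ω → ℝ :=
  fun x => ∑' n, Set.indicator (P n)
    (fun _ => (∫ y in P n, f y ∂μ) / (μ (P n)).toReal) x

/-- The Boltzmann state of a cell `A`: the probability density `ρ_A = χ_A / μ(A)`. -/
noncomputable def boltzmannState {Ω : Type*} [MeasurableSpace Ω]
    (μ : Measure Ω) (A : Set Ω) : Ω → ℝ :=
  Set.indicator A (fun _ => ((μ A).toReal)⁻¹)

/-- The Gibbs entropy `S_G[ρ] = −∫ ρ log ρ dμ` (with `0 · log 0 = 0`). -/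
noncomputable def gibbsEntropy {Ω : Type*} [MeasurableSpace Ω]
    (μ : Measure Ω) (ρ : Ω → ℝ) : ℝ :=
  - ∫ x, ρ x * Real.log (ρ x) ∂μ

/-- Gibbs' inequality for an evolved Boltzmann state: for a Boltzmann partition `P`,
a measure-preserving bijection `U` and a cell `A = P a`, assuming the series
`Σ_B |Pr(B|A) log(Pr(B|A)/μ(B))|` converges, the coarse-grained Gibbs entropy of the
evolved Boltzmann state satisfies `S_G[C(ρ_A ∘ U⁻¹)] ≥ log μ(A) = S_G[ρ_A]`. -/
lemma integral_tsum_indicator {Ω : Type*} [MeasurableSpace Ω] (μ : Measure Ω)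
    (P : ℕ → Set Ω) (hm : ∀ n, MeasurableSet (P n)) (d : ℕ → ℝ)
    (hfin : ∀ n, μ (P n) < ⊤)
    (hs : Summable fun n => |d n| * (μ (P n)).toReal) :
    ∫ x, (∑' n, Set.indicator (P n) (fun _ => d n) x) ∂μ
      = ∑' n, d n * (μ (P n)).toReal := by
  rw [integral_tsum (fun n => (measurable_const.indicator (hm n)).aestronglyMeasurable) ?_]
  · congr 1; funext n
    rw [integral_indicator_const _ (hm n), smul_eq_mul, mul_comm, measureReal_def]
  · have hpt : ∀ n (a : Ω), ‖Set.indicator (P n) (fun _ => d n) a‖ₑ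
        = Set.indicator (P n) (fun _ => (ENNReal.ofReal (|d n|))) a := by
      intro n x
      by_cases hx : x ∈ P n <;>
        simp [hx, Real.enorm_eq_ofReal_abs]
    have : ∀ n, ∫⁻ a, ‖Set.indicator (P n) (fun _ => d n) a‖ₑ ∂μ
        = ENNReal.ofReal (|d n| * (μ (P n)).toReal) := by
      intro n
      simp only [hpt]
      rw [lintegral_indicator_const (hm n), ENNReal.ofReal_mul (abs_nonneg _),
        ENNReal.ofReal_toReal (hfin n).ne]
    rw [funext this, ← ENNReal.ofReal_tsum_of_nonneg
      (fun n => mul_nonneg (abs_nonneg _) ENNReal.toReal_nonneg) hs]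
    exact ENNReal.ofReal_ne_top

theorem gibbs_inequality_evolved_boltzmannState {Ω : Type*} [MeasurableSpace Ω]
    (μ : Measure Ω) [SigmaFinite μ]
    (P : ℕ → Set Ω) (hPmeas : ∀ n, MeasurableSet (P n))
    (hPdisj : Pairwise (Function.onFun Disjoint P)) (hPcover : (⋃ n, P n) = Set.univ)
    (hPpos : ∀ n, 0 < μ (P n)) (hPfin : ∀ n, μ (P n) < ⊤)
    (U : Ω ≃ᵐ Ω) (hU : MeasurePreserving U μ μ) (a : ℕ)
    (hsum : Summable (fun n =>
      |((μ (U '' P a ∩ P n)).toReal / (μ (P a)).toReal)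
        * Real.log (((μ (U '' P a ∩ P n)).toReal / (μ (P a)).toReal)
            / (μ (P n)).toReal)|)) :
    Real.log (μ (P a)).toReal
        ≤ gibbsEntropy μ (coarseGrain μ P (fun x => boltzmannState μ (P a) (U.symm x)))
      ∧ Real.log (μ (P a)).toReal = gibbsEntropy μ (boltzmannState μ (P a)) := by
  have hAmeas := hPmeas a
  have hmfin : μ (P a) ≠ ⊤ := (hPfin a).ne
  have hmpos : 0 < (μ (P a)).toReal := ENNReal.toReal_pos (hPpos a).ne' hmfin
  set m := (μ (P a)).toReal with hm
  have hμnpos : ∀ n, 0 < (μ (P n)).toReal :=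
    fun n => ENNReal.toReal_pos (hPpos n).ne' (hPfin n).ne
  -- image facts
  have himg : U '' P a = U.symm ⁻¹' P a := MeasurableEquiv.image_eq_preimage_symm U _
  have himgmeas : MeasurableSet (U '' P a) := by
    rw [himg]; exact U.symm.measurable hAmeas
  have hμimg : μ (U '' P a) = μ (P a) := by
    rw [himg]; exact (hU.symm U).measure_preimage hAmeas.nullMeasurableSet
  set p : ℕ → ℝ := fun n => (μ (U '' P a ∩ P n)).toReal / m with hp
  set c : ℕ → ℝ := fun n => p n / (μ (P n)).toReal with hc
  have hpnonneg : ∀ n, 0 ≤ p n := fun n => div_nonneg ENNReal.toReal_nonneg hmpos.le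
  have hνle : ∀ n, (μ (U '' P a ∩ P n)).toReal ≤ (μ (P n)).toReal :=
    fun n => ENNReal.toReal_mono (hPfin n).ne (measure_mono inter_subset_right)
  -- p sums to 1
  have hsum_meas : ∑' n, μ (U '' P a ∩ P n) = μ (P a) := by
    rw [← hμimg]
    rw [← measure_iUnion (fun i j hij =>
        ((hPdisj hij).mono inter_subset_right inter_subset_right))
      (fun n => himgmeas.inter (hPmeas n))]
    rw [← Set.inter_iUnion, hPcover, Set.inter_univ]
  have hHasSumν : HasSum (fun n => (μ (U '' P a ∩ P n)).toReal) m := by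
    have hne : ∑' n, μ (U '' P a ∩ P n) ≠ ⊤ := by rw [hsum_meas]; exact hmfin
    have h1 := ENNReal.hasSum_toReal hne
    have h2 : ∑' n, (μ (U '' P a ∩ P n)).toReal = m := by
      rw [hm, ← hsum_meas, ENNReal.tsum_toReal_eq
        (fun n => ((measure_mono inter_subset_right).trans_lt (hPfin n)).ne)]
    rwa [h2] at h1
  have hHasSump : HasSum p 1 := by
    have := hHasSumν.div_const m
    rwa [div_self hmpos.ne'] at this
  -- coarse grain equals tsum of indicators with constants c n
  have hCG : coarseGrain μ P (fun x => boltzmannState μ (P a) (U.symm x))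
      = fun x => ∑' n, Set.indicator (P n) (fun _ => c n) x := by
    unfold coarseGrain
    funext x
    congr 1; funext n; congr 2
    have hfun : (fun y => boltzmannState μ (P a) (U.symm y))
        = Set.indicator (U '' P a) (fun _ => m⁻¹) := by
      funext y
      unfold boltzmannState
      rw [himg, ← Set.indicator_comp_right]
      rfl
    rw [hfun, integral_indicator_const _ himgmeas, measureReal_def, Measure.restrict_apply himgmeas,
      smul_eq_mul, hc, hp]
    ring_nf
  -- pointwise: g * log g = tsum of indicators of c n * log (c n)
  have hpt : ∀ x, (∑' n, Set.indicator (P n) (fun _ => c n) x)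
        * Real.log (∑' n, Set.indicator (P n) (fun _ => c n) x)
      = ∑' n, Set.indicator (P n) (fun _ => c n * Real.log (c n)) x := by
    intro x
    have hx : x ∈ ⋃ n, P n := hPcover ▸ Set.mem_univ x
    obtain ⟨k, hk⟩ := Set.mem_iUnion.mp hx
    have hnot : ∀ n, n ≠ k → x ∉ P n := fun n hn hxn =>
      Set.disjoint_left.mp (hPdisj hn) hxn hk
    rw [tsum_eq_single k (fun n hn => Set.indicator_of_notMem (hnot n hn) _),
      tsum_eq_single k (fun n hn => Set.indicator_of_notMem (hnot n hn) _),
      Set.indicator_of_mem hk, Set.indicator_of_mem hk]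
  -- the key summability in the form needed
  have hcμ : ∀ n, c n * (μ (P n)).toReal = p n :=
    fun n => div_mul_cancel₀ _ (hμnpos n).ne'
  have hseq : (fun n => |c n * Real.log (c n)| * (μ (P n)).toReal)
      = fun n => |p n * Real.log (p n / (μ (P n)).toReal)| := by
    funext n
    have h1 : c n * Real.log (c n) * (μ (P n)).toReal
        = p n * Real.log (p n / (μ (P n)).toReal) := by
      rw [mul_right_comm, hcμ n]
    calc |c n * Real.log (c n)| * (μ (P n)).toReal
        = |c n * Real.log (c n) * (μ (P n)).toReal| := by
          rw [abs_mul (c n * Real.log (c n)) ((μ (P n)).toReal), abs_of_nonneg (hμnpos n).le]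
      _ = _ := by rw [h1]
  have hs' : Summable fun n => |c n * Real.log (c n)| * (μ (P n)).toReal := by
    rw [hseq]; exact hsum
  -- compute the entropy of the coarse-grained state
  have hent : gibbsEntropy μ (coarseGrain μ P (fun x => boltzmannState μ (P a) (U.symm x)))
      = - ∑' n, p n * Real.log (c n) := by
    unfold gibbsEntropy
    rw [hCG]
    simp only [hpt]
    rw [integral_tsum_indicator μ P hPmeas _ hPfin hs']
    congr 1
    exact tsum_congr fun n => by rw [mul_right_comm, hcμ n]
  constructor
  · rw [hent, le_neg]
    have hterm : ∀ n, p n * Real.log (c n) ≤ p n * (-Real.log m) := by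
      intro n
      rcases eq_or_lt_of_le (hpnonneg n) with h0 | hpos
      · rw [← h0]; simp
      · apply mul_le_mul_of_nonneg_left _ hpos.le
        rw [← Real.log_inv]
        have hcpos : 0 < c n := div_pos hpos (hμnpos n)
        apply Real.log_le_log hcpos
        show (μ (U '' P a ∩ P n)).toReal / m / (μ (P n)).toReal ≤ m⁻¹
        rw [div_div, div_le_iff₀ (mul_pos hmpos (hμnpos n))]
        calc (μ (U '' P a ∩ P n)).toReal ≤ (μ (P n)).toReal := hνle n
          _ = m⁻¹ * (m * (μ (P n)).toReal) := by field_simp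
    have hR : ∑' n, p n * (-Real.log m) = -Real.log m := by
      rw [tsum_mul_right, hHasSump.tsum_eq, one_mul]
    calc ∑' n, p n * Real.log (c n)
        ≤ ∑' n, p n * (-Real.log m) := by
          apply Summable.tsum_le_tsum (h := hterm)
          · have : Summable fun n => p n * Real.log (c n) := by
              apply Summable.of_abs
              have : (fun n => |p n * Real.log (c n)|)
                  = fun n => |p n * Real.log (p n / (μ (P n)).toReal)| := by
                funext n; rw [hc]
              rw [this]; exact hsum
            exact this
          · exact hHasSump.summable.mul_right _
      _ = -Real.log m := hR
  · -- entropy of the Boltzmann state itself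
    have hfun : (fun x => boltzmannState μ (P a) x * Real.log (boltzmannState μ (P a) x))
        = Set.indicator (P a) (fun _ => m⁻¹ * Real.log m⁻¹) := by
      funext x
      unfold boltzmannState
      by_cases hx : x ∈ P a <;> simp [hx, ← hm]
    unfold gibbsEntropy
    rw [hfun, integral_indicator_const _ hAmeas, smul_eq_mul, measureReal_def, ← hm, Real.log_inv]
    field_simp
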